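/- Let X be a complex Banach space and Γ a set of bounded linear operators on X. Then Γ is recurrent if and only if the set Rec(Γ) of recurrent vectors for Γ is dense in X. -/

import Mathlib

open Filter Topology

/-- A vector `x` is *recurrent* for a set `Γ` of bounded linear operators if there is a
sequence `(T_k)` of operators in `Γ` with `T_k x → x`. -/
def IsRecurrentVector {X : Type*} [NormedAddCommGroup X] [NormedSpace ℂ X]
    (Γ : Set (X →L[ℂ] X)) (x : X) : Prop :=
  ∃ T : ℕ → X →L[ℂ] X, (∀ k, T k ∈ Γ) ∧ Tendsto (fun k => T k x) atTop (𝓝 x)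

/-- A set `Γ` of bounded linear operators is *recurrent* if for each nonempty open set `U`
there exists `T ∈ Γ` with `T(U) ∩ U ≠ ∅`. -/
def IsRecurrentSet {X : Type*} [NormedAddCommGroup X] [NormedSpace ℂ X]
    (Γ : Set (X →L[ℂ] X)) : Prop :=
  ∀ U : Set X, IsOpen U → U.Nonempty → ∃ T ∈ Γ, (T '' U ∩ U).Nonempty

theorem recurrentSet_iff_dense_recVectors {X : Type*} [NormedAddCommGroup X]
    [NormedSpace ℂ X] [CompleteSpace X] (Γ : Set (X →L[ℂ] X)) :
    IsRecurrentSet Γ ↔ Dense {x : X | IsRecurrentVector Γ x} := by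
  constructor
  · intro hΓ
    set G : ℕ → Set X := fun n => ⋃ T ∈ Γ, {x : X | ‖T x - x‖ < 1 / (n + 1)} with hGdef
    have hopen : ∀ n, IsOpen (G n) := by
      intro n
      refine isOpen_biUnion fun T _ => ?_
      exact isOpen_lt (by fun_prop) continuous_const
    have hdense : ∀ n, Dense (G n) := by
      intro n
      rw [Metric.dense_iff]
      intro x r hr
      have hpos : (0 : ℝ) < min r (1 / (2 * (n + 1))) := by positivity
      obtain ⟨T, hT, w, ⟨z, hz, rfl⟩, hw⟩ :=
        hΓ (Metric.ball x (min r (1 / (2 * (n + 1))))) Metric.isOpen_ball ⟨x, by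
          simpa [Metric.mem_ball] using hpos⟩
      refine ⟨z, ?_, ?_⟩
      · have := Metric.mem_ball.1 hz
        exact Metric.mem_ball.1 (Metric.mem_ball.2 (lt_of_lt_of_le this (min_le_left _ _)))
      · refine Set.mem_biUnion hT ?_
        have h1 : dist (T z) x < min r (1 / (2 * (n + 1))) := Metric.mem_ball.1 hw
        have h2 : dist z x < min r (1 / (2 * (n + 1))) := Metric.mem_ball.1 hz
        have hle : min r (1 / (2 * (n + 1))) ≤ 1 / (2 * (n + 1)) := min_le_right _ _
        have : ‖T z - z‖ ≤ dist (T z) x + dist z x := by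
          rw [← dist_eq_norm]
          exact dist_triangle_right _ _ _
        have hlt : ‖T z - z‖ < 1 / (2 * (n + 1)) + 1 / (2 * (n + 1)) :=
          lt_of_le_of_lt this (add_lt_add (lt_of_lt_of_le h1 hle) (lt_of_lt_of_le h2 hle))
        have heq : 1 / (2 * ((n : ℝ) + 1)) + 1 / (2 * (n + 1)) = 1 / (n + 1) := by
          rw [← add_div, div_eq_div_iff (by positivity) (by positivity)]; ring
        rw [heq] at hlt
        exact hlt
    have hBaire : Dense (⋂ n, G n) := dense_iInter_of_isOpen hopen hdense
    refine hBaire.mono fun x hx => ?_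
    simp only [Set.mem_iInter] at hx
    choose T hTΓ hTx using fun n => Set.mem_iUnion₂.1 (hx n)
    refine ⟨T, hTΓ, ?_⟩
    rw [tendsto_iff_norm_sub_tendsto_zero]
    refine squeeze_zero (fun n => norm_nonneg _) (fun n => le_of_lt (hTx n)) ?_
    exact tendsto_one_div_add_atTop_nhds_zero_nat
  · intro hd U hU hne
    obtain ⟨x, hxR, hxU⟩ := hd.exists_mem_open hU hne
    obtain ⟨T, hTΓ, hTx⟩ := hxR
    have : ∀ᶠ k in atTop, T k x ∈ U := hTx.eventually (hU.mem_nhds hxU)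
    obtain ⟨k, hk⟩ := this.exists
    exact ⟨T k, hTΓ k, T k x, ⟨x, hxU, rfl⟩, hk⟩
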